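/- Let X be a separable Banach space over ℝ containing an increasing sequence (X_i)_{i=1}^∞ of finite-dimensional subspaces satisfying: (a) sup_i λ(X_i, X) < ∞; (b) the closure of ⋃_{i=1}^∞ X_i equals X; and (c) for every strictly increasing sequence of indices (i_n)_{n=1}^∞ and every sequence of linear projections P_n : X_{i_{n+1}} → X_{i_n} (linear maps whose restriction to X_{i_n} is the identity), sup_{k,l ∈ ℕ, k < l} ‖P_k P_{k+1} ⋯ P_{l-1} P_l‖ = ∞. Then X has the π-property but does not have a finite dimensional decomposition. -/

import Mathlib

open Filter Topology Metric Set

noncomputable section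

/-- `X` has the π-property: there is a sequence of finite-rank continuous linear
projections converging strongly to the identity. -/
def HasPiProperty (X : Type*) [NormedAddCommGroup X] [NormedSpace ℝ X] : Prop :=
  ∃ T : ℕ → X →L[ℝ] X,
    (∀ n, (T n).comp (T n) = T n) ∧
    (∀ n, FiniteDimensional ℝ (LinearMap.range (T n : X →ₗ[ℝ] X))) ∧
    (∀ x : X, Tendsto (fun n => ‖x - T n x‖) atTop (𝓝 0))

/-- `X` has a finite dimensional decomposition: moreover the projections commute,
`T n ∘ T m = T (min m n)`. -/
def HasFDDProperty (X : Type*) [NormedAddCommGroup X] [NormedSpace ℝ X] : Prop :=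
  ∃ T : ℕ → X →L[ℝ] X,
    (∀ n, FiniteDimensional ℝ (LinearMap.range (T n : X →ₗ[ℝ] X))) ∧
    (∀ x : X, Tendsto (fun n => ‖x - T n x‖) atTop (𝓝 0)) ∧
    (∀ m n, (T n).comp (T m) = T (min m n))

/-- Relative projection constant of a subspace `Y` of `X`. -/
def relProjConst {X : Type*} [NormedAddCommGroup X] [NormedSpace ℝ X]
    (Y : Submodule ℝ X) : ℝ :=
  sInf {c : ℝ | ∃ P : X →L[ℝ] X, P.comp P = P ∧ LinearMap.range (P : X →ₗ[ℝ] X) = Y ∧ ‖P‖ = c}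

/-- Composition `P k ∘ P (k+1) ∘ ⋯ ∘ P (k+j)` of the projections
`P n : W (n+1) → W n`, as a map `W (k+j+1) → W k`. -/
def projChain {X : Type*} [NormedAddCommGroup X] [NormedSpace ℝ X]
    {W : ℕ → Submodule ℝ X} (P : (n : ℕ) → (W (n+1) →L[ℝ] W n)) :
    (k j : ℕ) → (W (k + j + 1) →L[ℝ] W k)
  | k, 0 => P k
  | k, j+1 => (projChain P k j).comp (P (k + j + 1))

/-- Condition (c): for every subsequence and every sequence of projections between
consecutive subspaces of the subsequence, the norms of the compositions
`P k ∘ ⋯ ∘ P l` (with `k < l`) are unbounded. -/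
def ChainCondition {X : Type*} [NormedAddCommGroup X] [NormedSpace ℝ X]
    (V : ℕ → Submodule ℝ X) : Prop :=
  ∀ idx : ℕ → ℕ, StrictMono idx →
    ∀ P : (n : ℕ) → ((V (idx (n+1)) : Submodule ℝ X) →L[ℝ] V (idx n)),
      (∀ (n : ℕ) (x : X) (hx : x ∈ V (idx n)) (hx' : x ∈ V (idx (n+1))),
        ((P n ⟨x, hx'⟩ : V (idx n)) : X) = x) →
      ∀ C : ℝ, ∃ k j : ℕ, C < ‖projChain (W := fun n => V (idx n)) P k (j + 1)‖

end

section AuxiliaryLemmas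

set_option synthInstance.maxHeartbeats 1000000
set_option maxHeartbeats 2000000

variable {X : Type*} [NormedAddCommGroup X] [NormedSpace ℝ X]

-- coordinate bound lemma
lemma aux_coord (N : Submodule ℝ X) [FiniteDimensional ℝ N] :
    ∃ K : ℝ, 0 ≤ K ∧ ∀ (g : N →L[ℝ] X) (η : ℝ), 0 ≤ η →
      (∀ t, ‖g (Module.finBasis ℝ N t)‖ ≤ η) → ∀ y : N, ‖g y‖ ≤ K * η * ‖y‖ := by
  set b := Module.finBasis ℝ N with hb
  set c : Fin (Module.finrank ℝ N) → (N →L[ℝ] ℝ) :=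
    fun t => LinearMap.toContinuousLinearMap (b.coord t) with hc
  refine ⟨∑ t, ‖c t‖, Finset.sum_nonneg (fun t _ => (c t).opNorm_nonneg), ?_⟩
  intro g η hη hgt y
  have hy : y = ∑ t, b.repr y t • b t := (b.sum_repr y).symm
  have : g y = ∑ t, b.repr y t • g (b t) := by
    conv_lhs => rw [hy]
    rw [map_sum]
    simp [map_smul]
  rw [this]
  calc ‖∑ t, b.repr y t • g (b t)‖ ≤ ∑ t, ‖b.repr y t • g (b t)‖ := norm_sum_le _ _
    _ ≤ ∑ t, ‖c t‖ * ‖y‖ * η := by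
        apply Finset.sum_le_sum
        intro t _
        rw [norm_smul]
        have h1 : ‖b.repr y t‖ ≤ ‖c t‖ * ‖y‖ := by
          have := (c t).le_opNorm y
          simpa [hc] using this
        calc ‖b.repr y t‖ * ‖g (b t)‖ ≤ (‖c t‖ * ‖y‖) * η :=
              mul_le_mul h1 (hgt t) (norm_nonneg _) (by positivity)
          _ = ‖c t‖ * ‖y‖ * η := rfl
    _ = (∑ t, ‖c t‖) * η * ‖y‖ := by rw [← Finset.sum_mul, ← Finset.sum_mul]; ring

lemma aux_unifS (S : ℕ → X →L[ℝ] X)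
    (htend : ∀ x : X, Tendsto (fun n => ‖x - S n x‖) atTop (𝓝 0))
    (Y : Submodule ℝ X) [FiniteDimensional ℝ Y] {δ : ℝ} (hδ : 0 < δ) (mlo : ℕ) :
    ∃ m, mlo < m ∧ ∀ v ∈ Y, ‖v - S m v‖ ≤ δ * ‖v‖ := by
  obtain ⟨K, hK0, hK⟩ := aux_coord Y
  set b := Module.finBasis ℝ Y
  have hev : ∀ᶠ m in atTop, ∀ t, ‖(b t : X) - S m (b t)‖ ≤ δ / (K + 1) := by
    rw [eventually_all]
    intro t
    have := htend (b t : X)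
    have h2 : ∀ᶠ m in atTop, ‖(b t : X) - S m (b t)‖ < δ / (K + 1) := by
      have := (this.eventually (gt_mem_nhds (by positivity : (0:ℝ) < δ / (K+1))))
      exact this
    exact h2.mono fun m hm => le_of_lt hm
  obtain ⟨m, hm1, hm2⟩ := (hev.and (eventually_gt_atTop mlo)).exists
  refine ⟨m, hm2, ?_⟩
  intro v hv
  have := hK ((Submodule.subtypeL Y) - (S m).comp (Submodule.subtypeL Y)) (δ / (K+1))
    (by positivity) (by
      intro t
      simpa using hm1 t) ⟨v, hv⟩
  have h3 : ‖v - S m v‖ ≤ K * (δ / (K + 1)) * ‖v‖ := by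
    simpa using this
  calc ‖v - S m v‖ ≤ K * (δ / (K + 1)) * ‖v‖ := h3
    _ ≤ δ * ‖v‖ := by
        apply mul_le_mul_of_nonneg_right _ (norm_nonneg v)
        rw [div_eq_mul_inv]
        rw [show K * (δ * (K+1)⁻¹) = δ * (K * (K+1)⁻¹) by ring]
        nth_rewrite 2 [show δ = δ * 1 by ring]
        apply mul_le_mul_of_nonneg_left _ (le_of_lt hδ)
        rw [mul_inv_le_iff₀ (by positivity)]
        linarith

lemma aux_embed (V : ℕ → Submodule ℝ X) (hmono : Monotone V)
    (hb : closure (⋃ i, (V i : Set X)) = Set.univ)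
    (N : Submodule ℝ X) [FiniteDimensional ℝ N] {δ : ℝ} (hδ : 0 < δ) (jlo : ℕ) :
    ∃ j', jlo < j' ∧ ∃ B : N →L[ℝ] X, (∀ y, B y ∈ V j') ∧ ∀ y : N, ‖B y - (y : X)‖ ≤ δ * ‖y‖ := by
  obtain ⟨K, hK0, hK⟩ := aux_coord N
  set b := Module.finBasis ℝ N with hbdef
  -- choose approximations of the basis vectors
  have happrox : ∀ t : Fin (Module.finrank ℝ N), ∃ w : X, (∃ i, w ∈ V i) ∧
      ‖(b t : X) - w‖ ≤ δ / (K + 1) := by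
    intro t
    have hmem : (b t : X) ∈ closure (⋃ i, (V i : Set X)) := by rw [hb]; trivial
    rw [Metric.mem_closure_iff] at hmem
    obtain ⟨w, hw1, hw2⟩ := hmem (δ / (K+1)) (by positivity)
    rw [Set.mem_iUnion] at hw1
    exact ⟨w, by exact_mod_cast hw1, by rw [dist_eq_norm] at hw2; linarith⟩
  choose w hw1 hw2 using happrox
  choose iw hiw using hw1
  set j' : ℕ := max (jlo + 1) (Finset.univ.sup iw) with hj'
  have hwj : ∀ t, w t ∈ V j' := by
    intro t
    exact hmono (le_trans (Finset.le_sup (Finset.mem_univ t)) (le_max_right _ _)) (hiw t)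
  -- build the linear map
  set B0 : N →ₗ[ℝ] X := Module.Basis.constr b ℝ w with hB0
  set B : N →L[ℝ] X := LinearMap.toContinuousLinearMap B0 with hBdef
  refine ⟨j', lt_of_lt_of_le (Nat.lt_succ_self jlo) (le_max_left _ _), B, ?_, ?_⟩
  · intro y
    have : B y = ∑ t, b.repr y t • w t := by
      show B0 y = _
      rw [hB0, Module.Basis.constr_apply_fintype]
      rfl
    rw [this]
    exact Submodule.sum_mem _ (fun t _ => Submodule.smul_mem _ _ (hwj t))
  · intro y
    have := hK (B - Submodule.subtypeL N) (δ / (K+1)) (by positivity) (by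
      intro t
      have h1 : B (b t) = w t := by
        show B0 (b t) = w t
        rw [hB0, Module.Basis.constr_basis]
      simp only [ContinuousLinearMap.sub_apply, h1, Submodule.subtypeL_apply]
      rw [norm_sub_rev]
      exact hw2 t) y
    have h3 : ‖B y - (y : X)‖ ≤ K * (δ / (K + 1)) * ‖y‖ := by simpa using this
    calc ‖B y - (y : X)‖ ≤ K * (δ / (K + 1)) * ‖y‖ := h3
      _ ≤ δ * ‖y‖ := by
          apply mul_le_mul_of_nonneg_right _ (norm_nonneg y)
          rw [div_eq_mul_inv, show K * (δ * (K+1)⁻¹) = δ * (K * (K+1)⁻¹) by ring]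
          nth_rewrite 2 [show δ = δ * 1 by ring]
          apply mul_le_mul_of_nonneg_left _ (le_of_lt hδ)
          rw [mul_inv_le_iff₀ (by positivity)]
          linarith

variable [CompleteSpace X]

lemma aux_inv (u : (X →L[ℝ] X)ˣ) (h : ‖(↑u : X →L[ℝ] X) - 1‖ ≤ 1/2) :
    ‖(↑u⁻¹ : X →L[ℝ] X)‖ ≤ 2 ∧ ‖(↑u⁻¹ : X →L[ℝ] X) - 1‖ ≤ 2 * ‖(↑u : X →L[ℝ] X) - 1‖ := by
  have hid : (↑u⁻¹ : X →L[ℝ] X) = 1 - ↑u⁻¹ * ((↑u : X →L[ℝ] X) - 1) := by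
    rw [mul_sub, mul_one, Units.inv_mul, sub_sub_cancel]
  have h1 : ‖(↑u⁻¹ : X →L[ℝ] X)‖ ≤ 2 := by
    have hb : ‖(↑u⁻¹ : X →L[ℝ] X)‖ ≤ 1 + ‖(↑u⁻¹ : X →L[ℝ] X)‖ * (1/2) := by
      calc ‖(↑u⁻¹ : X →L[ℝ] X)‖ = ‖(1 : X →L[ℝ] X) - ↑u⁻¹ * ((↑u : X →L[ℝ] X) - 1)‖ := by
            rw [← hid]
        _ ≤ ‖(1 : X →L[ℝ] X)‖ + ‖(↑u⁻¹ : X →L[ℝ] X) * ((↑u : X →L[ℝ] X) - 1)‖ := norm_sub_le _ _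
        _ ≤ 1 + ‖(↑u⁻¹ : X →L[ℝ] X)‖ * (1/2) := by
            gcongr
            · exact ContinuousLinearMap.norm_id_le
            · exact le_trans (norm_mul_le _ _)
                (mul_le_mul_of_nonneg_left h (norm_nonneg _))
    linarith
  refine ⟨h1, ?_⟩
  have : ‖(↑u⁻¹ : X →L[ℝ] X) - 1‖ = ‖(↑u⁻¹ : X →L[ℝ] X) * ((↑u : X →L[ℝ] X) - 1)‖ := by
    rw [norm_sub_rev]
    congr 1
    rw [mul_sub, mul_one, Units.inv_mul]
  rw [this]
  calc ‖(↑u⁻¹ : X →L[ℝ] X) * ((↑u : X →L[ℝ] X) - 1)‖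
      ≤ ‖(↑u⁻¹ : X →L[ℝ] X)‖ * ‖(↑u : X →L[ℝ] X) - 1‖ := norm_mul_le _ _
    _ ≤ 2 * ‖(↑u : X →L[ℝ] X) - 1‖ := by gcongr

lemma aux_conj (u : (X →L[ℝ] X)ˣ) (B : X →L[ℝ] X) (h : ‖(↑u : X →L[ℝ] X) - 1‖ ≤ 1/2) :
    ‖↑u * B * ↑u⁻¹ - B‖ ≤ 4 * ‖(↑u : X →L[ℝ] X) - 1‖ * ‖B‖ := by
  obtain ⟨h1, h2⟩ := aux_inv u h
  have hid : (↑u : X →L[ℝ] X) * B * ↑u⁻¹ - B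
      = ((↑u : X →L[ℝ] X) - 1) * B * ↑u⁻¹ + B * ((↑u⁻¹ : X →L[ℝ] X) - 1) := by
    noncomm_ring
  rw [hid]
  calc ‖((↑u : X →L[ℝ] X) - 1) * B * ↑u⁻¹ + B * ((↑u⁻¹ : X →L[ℝ] X) - 1)‖
      ≤ ‖((↑u : X →L[ℝ] X) - 1) * B * ↑u⁻¹‖ + ‖B * ((↑u⁻¹ : X →L[ℝ] X) - 1)‖ := norm_add_le _ _
    _ ≤ ‖(↑u : X →L[ℝ] X) - 1‖ * ‖B‖ * ‖(↑u⁻¹ : X →L[ℝ] X)‖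
        + ‖B‖ * ‖(↑u⁻¹ : X →L[ℝ] X) - 1‖ := by
        gcongr
        · exact le_trans (norm_mul_le _ _) (by gcongr; exact norm_mul_le _ _)
        · exact norm_mul_le _ _
    _ ≤ ‖(↑u : X →L[ℝ] X) - 1‖ * ‖B‖ * 2 + ‖B‖ * (2 * ‖(↑u : X →L[ℝ] X) - 1‖) := by
        gcongr
    _ = 4 * ‖(↑u : X →L[ℝ] X) - 1‖ * ‖B‖ := by ring

lemma aux_conj_mul (u : (X →L[ℝ] X)ˣ) (a b : X →L[ℝ] X) :
    (↑u * a * ↑u⁻¹) * (↑u * b * ↑u⁻¹) = ↑u * (a * b) * ↑u⁻¹ := by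
  have : (↑u⁻¹ : X →L[ℝ] X) * ↑u = 1 := Units.inv_mul u
  calc (↑u * a * ↑u⁻¹) * (↑u * b * ↑u⁻¹) = ↑u * a * ((↑u⁻¹ * ↑u) * b) * ↑u⁻¹ := by
        simp only [mul_assoc]
    _ = ↑u * (a * b) * ↑u⁻¹ := by rw [this, one_mul]; simp only [mul_assoc]

lemma aux_step (V : ℕ → Submodule ℝ X) (hmono : Monotone V)
    (hfd : ∀ i, FiniteDimensional ℝ (V i))
    (hb : closure (⋃ i, (V i : Set X)) = Set.univ)
    (S : ℕ → X →L[ℝ] X) (M₀ : ℝ) (hM₀ : ∀ n, ‖S n‖ ≤ M₀)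
    (hidem : ∀ n, S n * S n = S n)
    (hfin : ∀ n, FiniteDimensional ℝ (LinearMap.range (S n : X →ₗ[ℝ] X)))
    (htend : ∀ x : X, Tendsto (fun n => ‖x - S n x‖) atTop (𝓝 0))
    (M : ℝ) (hM0 : 0 ≤ M)
    (π : X →L[ℝ] X) (j : ℕ)
    (hπfix : ∀ v ∈ V j, π v = v) (hπmem : ∀ x, π x ∈ V j) (hπM : ‖π‖ ≤ M)
    (mlo : ℕ) (ε : ℝ) (hε : 0 < ε) :
    ∃ m, mlo < m ∧ ∃ j', j < j' ∧ ∃ Q : X →L[ℝ] X,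
      Q * Q = Q ∧ (∀ v ∈ V j, Q v = v) ∧ (∀ x, Q x ∈ V j') ∧ ‖Q - S m‖ ≤ ε := by
  have hM₀0 : 0 ≤ M₀ := le_trans (norm_nonneg _) (hM₀ 0)
  set D : ℝ := M + M₀ + 2 with hDdef
  have hD1 : 1 ≤ D := by simp [hDdef]; linarith
  have hD0 : 0 < D := by linarith
  have hMD : M ≤ D := by simp [hDdef]; linarith
  have hM₀D : M₀ ≤ D := by simp [hDdef]; linarith
  set δ : ℝ := min (1/(32*D^2)) (ε/(136*D^3)) with hδdef
  have hδ0 : 0 < δ := lt_min (by positivity) (by positivity)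
  have hδa : δ ≤ 1/(32*D^2) := min_le_left _ _
  have hδb : δ ≤ ε/(136*D^3) := min_le_right _ _
  have hδD : δ * D ≤ 1/4 := by
    have h1 : δ * D ≤ (1/(32*D^2)) * D := by gcongr
    have h2 : (1/(32*D^2)) * D = 1/(32*D) := by field_simp
    have h3 : (1:ℝ)/(32*D) ≤ 1/4 := by
      rw [div_le_div_iff₀ (by positivity) (by norm_num)]
      nlinarith
    linarith
  have hδM : δ * M ≤ 1/4 := le_trans (by gcongr) hδD
  haveI := hfd j
  obtain ⟨m, hm, hSm⟩ := aux_unifS S htend (V j) hδ0 mlo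
  -- the first automorphism
  set T₁ : X →L[ℝ] X := 1 + (S m - 1) * π with hT₁def
  have hT₁apply : ∀ x, T₁ x = x + (S m (π x) - π x) := by
    intro x
    simp [hT₁def, ContinuousLinearMap.add_apply, ContinuousLinearMap.mul_apply,
      ContinuousLinearMap.sub_apply, ContinuousLinearMap.one_apply]
  have hT₁1 : ‖T₁ - 1‖ ≤ δ * M := by
    have heq : T₁ - 1 = (S m - 1) * π := by rw [hT₁def]; noncomm_ring
    rw [heq]
    apply ContinuousLinearMap.opNorm_le_bound _ (by positivity)
    intro x
    have h1 : ((S m - 1) * π) x = S m (π x) - π x := by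
      simp [ContinuousLinearMap.mul_apply, ContinuousLinearMap.sub_apply,
        ContinuousLinearMap.one_apply]
    rw [h1, norm_sub_rev]
    calc ‖π x - S m (π x)‖ ≤ δ * ‖π x‖ := hSm (π x) (hπmem x)
      _ ≤ δ * (M * ‖x‖) := by
          apply mul_le_mul_of_nonneg_left _ (le_of_lt hδ0)
          exact le_trans (π.le_opNorm x) (by gcongr)
      _ = δ * M * ‖x‖ := by ring
  have hT₁half : ‖T₁ - 1‖ ≤ 1/2 := le_trans hT₁1 (by linarith)
  have hu₁h : ‖(1 : X →L[ℝ] X) - T₁‖ < 1 := by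
    rw [norm_sub_rev]; linarith
  set u₁ : (X →L[ℝ] X)ˣ := Units.oneSub _ hu₁h with hu₁def
  have hu₁val : (↑u₁ : X →L[ℝ] X) = T₁ := by
    rw [hu₁def, Units.val_oneSub, sub_sub_cancel]
  obtain ⟨hinv1, hinv2⟩ := aux_inv u₁ (by rw [hu₁val]; exact hT₁half)
  have hinv2' : ‖(↑u₁⁻¹ : X →L[ℝ] X) - 1‖ ≤ 2 * (δ * M) := by
    rw [hu₁val] at hinv2; linarith
  set S' : X →L[ℝ] X := ↑u₁⁻¹ * S m * ↑u₁ with hS'def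
  have hS'alt : S' = ↑(u₁⁻¹) * S m * ↑(u₁⁻¹)⁻¹ := by rw [inv_inv]
  have hS'idem : S' * S' = S' := by
    rw [hS'alt, aux_conj_mul, hidem]
  have hu₁norm : ‖(↑u₁ : X →L[ℝ] X)‖ ≤ 2 := by
    rw [hu₁val]
    have he : T₁ = 1 + (T₁ - 1) := by abel
    calc ‖T₁‖ = ‖(1 : X →L[ℝ] X) + (T₁ - 1)‖ := by rw [← he]
      _ ≤ ‖(1 : X →L[ℝ] X)‖ + ‖T₁ - 1‖ := norm_add_le _ _
      _ ≤ 1 + 1/2 := add_le_add ContinuousLinearMap.norm_id_le hT₁half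
      _ ≤ 2 := by norm_num
  have hS'norm : ‖S'‖ ≤ 4 * D := by
    calc ‖S'‖ ≤ ‖(↑u₁⁻¹ : X →L[ℝ] X) * S m‖ * ‖(↑u₁ : X →L[ℝ] X)‖ := norm_mul_le _ _
      _ ≤ (‖(↑u₁⁻¹ : X →L[ℝ] X)‖ * ‖S m‖) * ‖(↑u₁ : X →L[ℝ] X)‖ := by
          gcongr; exact norm_mul_le _ _
      _ ≤ (2 * M₀) * 2 := by
          apply mul_le_mul _ hu₁norm (norm_nonneg _) (by positivity)
          exact mul_le_mul hinv1 (hM₀ m) (norm_nonneg _) (by norm_num)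
      _ ≤ 4 * D := by nlinarith
  have hS'Sm : ‖S' - S m‖ ≤ 8 * δ * D^2 := by
    have h := aux_conj u₁⁻¹ (S m) (le_trans hinv2' (by linarith))
    rw [← hS'alt] at h
    calc ‖S' - S m‖ ≤ 4 * ‖(↑u₁⁻¹ : X →L[ℝ] X) - 1‖ * ‖S m‖ := h
      _ ≤ 4 * (2 * (δ * M)) * M₀ := by
          apply mul_le_mul _ (hM₀ m) (norm_nonneg _) (by positivity)
          gcongr
      _ ≤ 8 * δ * D^2 := by
          have hMM : M * M₀ ≤ D * D := mul_le_mul hMD hM₀D hM₀0 hD0.le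
          nlinarith [hδ0.le, hMM]
  have hSmSm : ∀ x, S m (S m x) = S m x := by
    intro x
    have := DFunLike.congr_fun (hidem m) x
    simpa [ContinuousLinearMap.mul_apply] using this
  have hS'fix : ∀ v ∈ V j, S' v = v := by
    intro v hv
    have h1 : T₁ v = S m v := by
      rw [hT₁apply, hπfix v hv]; abel
    have h3 : S' v = (↑u₁⁻¹ : X →L[ℝ] X) (S m ((↑u₁ : X →L[ℝ] X) v)) := rfl
    rw [hu₁val] at h3
    have h4 : S m (T₁ v) = T₁ v := by rw [h1]; exact hSmSm v
    rw [h3, h4, ← hu₁val]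
    calc (↑u₁⁻¹ : X →L[ℝ] X) ((↑u₁ : X →L[ℝ] X) v)
        = ((↑u₁⁻¹ * ↑u₁ : X →L[ℝ] X)) v := rfl
      _ = v := by rw [Units.inv_mul]; rfl
  -- the embedding of the range of S m into some V j'
  haveI := hfin m
  obtain ⟨j', hj', B, hB1, hB2⟩ := aux_embed V hmono hb (LinearMap.range (S m : X →ₗ[ℝ] X)) hδ0 j
  set A : X →L[ℝ] X :=
    B.comp ((S m).codRestrict (LinearMap.range (S m : X →ₗ[ℝ] X))
      (fun z => LinearMap.mem_range_self _ z)) with hAdef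
  have hAmem : ∀ z, A z ∈ V j' := fun z => hB1 _
  have hAS : ∀ z, ‖A z - S m z‖ ≤ δ * ‖S m z‖ := by
    intro z
    have := hB2 (((S m).codRestrict (LinearMap.range (S m : X →ₗ[ℝ] X))
      (fun z => LinearMap.mem_range_self _ z)) z)
    exact this
  set Ψ : X →L[ℝ] X := (A - 1) * (1 - π) with hΨdef
  have hΨapply : ∀ x, Ψ x = A (x - π x) - (x - π x) := by
    intro x
    simp [hΨdef, ContinuousLinearMap.mul_apply, ContinuousLinearMap.sub_apply,
      ContinuousLinearMap.one_apply]
  set T₂ : X →L[ℝ] X := 1 + Ψ * S' with hT₂def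
  have hT₂apply : ∀ x, T₂ x = x + Ψ (S' x) := by
    intro x
    simp [hT₂def, ContinuousLinearMap.add_apply, ContinuousLinearMap.mul_apply,
      ContinuousLinearMap.one_apply]
  -- the key fixed-range fact
  have hw : ∀ z, S m (S' z - π (S' z)) = S' z - π (S' z) := by
    intro z
    have e1 : T₁ (S' z) = S m (T₁ z) := by
      have h : T₁ * S' = S m * T₁ := by
        rw [hS'def, ← hu₁val]
        calc (↑u₁ : X →L[ℝ] X) * (↑u₁⁻¹ * S m * ↑u₁)
            = (↑u₁ * ↑u₁⁻¹) * S m * ↑u₁ := by simp only [mul_assoc]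
          _ = S m * ↑u₁ := by rw [Units.mul_inv, one_mul]
      have := DFunLike.congr_fun h z
      simpa [ContinuousLinearMap.mul_apply] using this
    have e2 : T₁ (S' z) = S' z + (S m (π (S' z)) - π (S' z)) := hT₁apply _
    have e3 : S' z - π (S' z) = S m (T₁ z - π (S' z)) := by
      rw [map_sub]
      rw [← e1, e2]
      abel
    rw [e3, hSmSm]
  have hT₂fix : ∀ v ∈ V j, T₂ v = v := by
    intro v hv
    rw [hT₂apply, hS'fix v hv, hΨapply, hπfix v hv]
    simp
  have hΨS'bound : ∀ z, ‖Ψ (S' z)‖ ≤ δ * (8 * D^2) * ‖z‖ := by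
    intro z
    set w : X := S' z - π (S' z) with hwdef
    have h1 : Ψ (S' z) = A w - w := hΨapply _
    have h2 : ‖A w - w‖ ≤ δ * ‖w‖ := by
      have := hAS w
      rw [hw z] at this
      exact this
    have h3 : ‖w‖ ≤ (1 + M) * ‖S' z‖ := by
      calc ‖w‖ ≤ ‖S' z‖ + ‖π (S' z)‖ := norm_sub_le _ _
        _ ≤ ‖S' z‖ + M * ‖S' z‖ := by
            gcongr
            exact le_trans (π.le_opNorm _) (by gcongr)
        _ = (1 + M) * ‖S' z‖ := by ring
    have h4 : ‖S' z‖ ≤ 4 * D * ‖z‖ := le_trans (S'.le_opNorm z) (by gcongr)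
    rw [h1]
    calc ‖A w - w‖ ≤ δ * ‖w‖ := h2
      _ ≤ δ * ((1 + M) * (4 * D * ‖z‖)) := by
          apply mul_le_mul_of_nonneg_left _ (le_of_lt hδ0)
          exact le_trans h3 (by gcongr)
      _ ≤ δ * (8 * D^2) * ‖z‖ := by
          have h1M : (1 + M) * (4 * D * ‖z‖) ≤ 8 * D^2 * ‖z‖ := by
            have key : 0 ≤ (2*D - (1+M)) * (4*D*‖z‖) :=
              mul_nonneg (by linarith) (by positivity)
            nlinarith [key]
          calc δ * ((1 + M) * (4 * D * ‖z‖)) ≤ δ * (8 * D^2 * ‖z‖) :=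
                mul_le_mul_of_nonneg_left h1M hδ0.le
            _ = δ * (8 * D^2) * ‖z‖ := by ring
  have hT₂1 : ‖T₂ - 1‖ ≤ δ * (8 * D^2) := by
    have heq : T₂ - 1 = Ψ * S' := by rw [hT₂def]; noncomm_ring
    rw [heq]
    apply ContinuousLinearMap.opNorm_le_bound _ (by positivity)
    intro z
    have : (Ψ * S') z = Ψ (S' z) := by simp [ContinuousLinearMap.mul_apply]
    rw [this]
    exact hΨS'bound z
  have hT₂quarter : ‖T₂ - 1‖ ≤ 1/4 := by
    apply le_trans hT₂1
    have : δ * (8 * D^2) ≤ (1/(32*D^2)) * (8*D^2) := by gcongr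
    calc δ * (8 * D^2) ≤ (1/(32*D^2)) * (8*D^2) := this
      _ = 1/4 := by field_simp; ring
  have hu₂h : ‖(1 : X →L[ℝ] X) - T₂‖ < 1 := by rw [norm_sub_rev]; linarith
  set u₂ : (X →L[ℝ] X)ˣ := Units.oneSub _ hu₂h with hu₂def
  have hu₂val : (↑u₂ : X →L[ℝ] X) = T₂ := by
    rw [hu₂def, Units.val_oneSub, sub_sub_cancel]
  set Q : X →L[ℝ] X := ↑u₂ * S' * ↑u₂⁻¹ with hQdef
  have hQidem : Q * Q = Q := by rw [hQdef, aux_conj_mul, hS'idem]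
  have hu₂invfix : ∀ v ∈ V j, (↑u₂⁻¹ : X →L[ℝ] X) v = v := by
    intro v hv
    have h1 : (↑u₂⁻¹ : X →L[ℝ] X) ((↑u₂ : X →L[ℝ] X) v) = v := by
      calc (↑u₂⁻¹ : X →L[ℝ] X) ((↑u₂ : X →L[ℝ] X) v)
          = ((↑u₂⁻¹ * ↑u₂ : X →L[ℝ] X)) v := rfl
        _ = v := by rw [Units.inv_mul]; rfl
    rw [hu₂val, hT₂fix v hv] at h1
    exact h1
  have hQfix : ∀ v ∈ V j, Q v = v := by
    intro v hv
    have h1 : Q v = (↑u₂ : X →L[ℝ] X) (S' ((↑u₂⁻¹ : X →L[ℝ] X) v)) := by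
      simp [hQdef, ContinuousLinearMap.mul_apply]
    rw [h1, hu₂invfix v hv, hS'fix v hv, hu₂val, hT₂fix v hv]
  have hS'S' : ∀ x, S' (S' x) = S' x := by
    intro x
    have := DFunLike.congr_fun hS'idem x
    simpa [ContinuousLinearMap.mul_apply] using this
  have hQmem : ∀ x, Q x ∈ V j' := by
    intro x
    set y : X := (↑u₂⁻¹ : X →L[ℝ] X) x with hydef
    have h1 : Q x = T₂ (S' y) := by
      simp [hQdef, ContinuousLinearMap.mul_apply, hu₂val, hydef]
    have h2 : T₂ (S' y) = π (S' y) + A (S' y - π (S' y)) := by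
      rw [hT₂apply, hΨapply, hS'S']
      abel
    rw [h1, h2]
    apply Submodule.add_mem
    · exact hmono (le_of_lt hj') (hπmem _)
    · exact hAmem _
  have hQS' : ‖Q - S'‖ ≤ 4 * (δ * (8 * D^2)) * (4 * D) := by
    have h := aux_conj u₂ S' (by rw [hu₂val]; linarith)
    rw [← hQdef] at h
    calc ‖Q - S'‖ ≤ 4 * ‖(↑u₂ : X →L[ℝ] X) - 1‖ * ‖S'‖ := h
      _ ≤ 4 * (δ * (8 * D^2)) * (4 * D) := by
          apply mul_le_mul _ hS'norm (norm_nonneg _) (by positivity)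
          rw [hu₂val]
          gcongr
  have hfinal : ‖Q - S m‖ ≤ ε := by
    have h1 : ‖Q - S m‖ ≤ ‖Q - S'‖ + ‖S' - S m‖ := by
      have : Q - S m = (Q - S') + (S' - S m) := by abel
      rw [this]; exact norm_add_le _ _
    have h2 : ‖Q - S m‖ ≤ 128 * δ * D^3 + 8 * δ * D^2 := by
      have := hQS'
      nlinarith [hS'Sm]
    have h3 : (128:ℝ) * δ * D^3 + 8 * δ * D^2 ≤ 136 * δ * D^3 := by
      have hpos : 0 ≤ δ * D^2 * (D - 1) :=
        mul_nonneg (by positivity) (by linarith)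
      nlinarith [hpos]
    have h4 : (136:ℝ) * δ * D^3 ≤ ε := by
      have h5 : δ * (136*D^3) ≤ ε := by
        rw [← le_div_iff₀ (by positivity : (0:ℝ) < 136*D^3)]
        exact hδb
      linarith [show (136:ℝ)*δ*D^3 = δ*(136*D^3) from by ring]
    linarith
  exact ⟨m, hm, j', hj', Q, hQidem, hQfix, hQmem, hfinal⟩

end AuxiliaryLemmas

set_option synthInstance.maxHeartbeats 1000000 in
set_option maxHeartbeats 4000000 in
theorem pi_property_without_FDD_of_subspaces
    (X : Type*) [NormedAddCommGroup X] [NormedSpace ℝ X]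
    [CompleteSpace X] [TopologicalSpace.SeparableSpace X]
    (V : ℕ → Submodule ℝ X)
    (hmono : Monotone V) (hfd : ∀ i, FiniteDimensional ℝ (V i))
    -- (a) sup_i λ(X_i, X) < ∞
    (haproj : ∀ i, ∃ P : X →L[ℝ] X, P.comp P = P ∧ LinearMap.range (P : X →ₗ[ℝ] X) = V i)
    (habdd : ∃ C : ℝ, ∀ i, relProjConst (V i) ≤ C)
    -- (b) the union of the subspaces is dense in X
    (hb : closure (⋃ i, (V i : Set X)) = Set.univ)
    -- (c) compositions of projections along any subsequence are unbounded
    (hc : ChainCondition V) :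
    HasPiProperty X ∧ ¬ HasFDDProperty X := by
  obtain ⟨C, hC⟩ := habdd
  set M : ℝ := max C 0 + 1 with hMdef
  have hM0 : 0 ≤ M := by positivity
  have hsel : ∀ i, ∃ P : X →L[ℝ] X, P.comp P = P ∧ LinearMap.range (P : X →ₗ[ℝ] X) = V i ∧ ‖P‖ ≤ M := by
    intro i
    set s : Set ℝ := {c : ℝ | ∃ P : X →L[ℝ] X, P.comp P = P ∧ LinearMap.range (P : X →ₗ[ℝ] X) = V i ∧ ‖P‖ = c}
      with hsdef
    have hne : s.Nonempty := by
      obtain ⟨P, h1, h2⟩ := haproj i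
      exact ⟨‖P‖, P, h1, h2, rfl⟩
    have hbdd : BddBelow s := by
      refine ⟨0, ?_⟩
      rintro c ⟨P, -, -, rfl⟩
      exact norm_nonneg P
    have hlt : sInf s < M := by
      have := hC i
      have h2 : relProjConst (V i) = sInf s := rfl
      rw [h2] at this
      have h3 : C ≤ max C 0 := le_max_left _ _
      linarith [hMdef]
    obtain ⟨c, ⟨P, h1, h2, rfl⟩, hcM⟩ := (csInf_lt_iff hbdd hne).1 hlt
    exact ⟨P, h1, h2, le_of_lt hcM⟩
  choose πf hπ1 hπ2 hπ3 using hsel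
  have hπfix : ∀ i, ∀ v ∈ V i, πf i v = v := by
    intro i v hv
    rw [← hπ2 i] at hv
    obtain ⟨u, hu⟩ := hv
    have hc2 := DFunLike.congr_fun (hπ1 i) u
    simp only [ContinuousLinearMap.comp_apply] at hc2
    -- hu : πf i u = v  (as linear map application)
    have hu' : πf i u = v := hu
    rw [← hu', hc2]
  have hπmem : ∀ i, ∀ x, πf i x ∈ V i := by
    intro i x
    rw [← hπ2 i]
    exact LinearMap.mem_range_self _ x
  refine ⟨⟨πf, hπ1, fun n => by rw [hπ2 n]; exact hfd n, ?_⟩, ?_⟩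
  · -- the π-property: strong convergence to the identity
    intro x
    rw [Metric.tendsto_atTop]
    intro ε hε
    have hx : x ∈ closure (⋃ i, (V i : Set X)) := by rw [hb]; trivial
    rw [Metric.mem_closure_iff] at hx
    obtain ⟨y, hy, hdist⟩ := hx (ε/(M+2)) (by positivity)
    rw [Set.mem_iUnion] at hy
    obtain ⟨i, hyi⟩ := hy
    refine ⟨i, fun n hn => ?_⟩
    have hyV : y ∈ V n := hmono hn hyi
    have hfixy : πf n y = y := hπfix n y hyV
    have heq : x - πf n x = (x - y) - πf n (x - y) := by
      rw [map_sub, hfixy]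
      abel
    have hxy : ‖x - y‖ < ε/(M+2) := by rwa [dist_eq_norm] at hdist
    have hb2 : ‖x - πf n x‖ ≤ (1 + M) * ‖x - y‖ := by
      rw [heq]
      calc ‖(x-y) - πf n (x-y)‖ ≤ ‖x-y‖ + ‖πf n (x-y)‖ := norm_sub_le _ _
        _ ≤ ‖x-y‖ + M * ‖x-y‖ :=
            add_le_add_right (le_trans ((πf n).le_opNorm _)
              (mul_le_mul_of_nonneg_right (hπ3 n) (norm_nonneg _))) _
        _ = (1 + M) * ‖x-y‖ := by ring
    rw [Real.dist_0_eq_abs, abs_of_nonneg (norm_nonneg _)]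
    calc ‖x - πf n x‖ ≤ (1 + M) * ‖x - y‖ := hb2
      _ < (1 + M) * (ε/(M+2)) := by
          apply mul_lt_mul_of_pos_left hxy (by linarith)
      _ < ε := by
          rw [mul_div_assoc'] ;
          rw [div_lt_iff₀ (by linarith)]
          nlinarith
  · -- no finite dimensional decomposition
    intro hFDD
    obtain ⟨S, hSfin, hStend, hScomm⟩ := hFDD
    revert hc
    intro hc
    classical
    -- basic consequences of the FDD structure
    have hSidem : ∀ n, S n * S n = S n := by
      intro n
      have h := hScomm n n
      rw [min_self] at h
      exact h
    have hSmul : ∀ a b, a ≤ b → S a * S b = S a := by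
      intro a b hab
      have h := hScomm b a
      rw [min_eq_right hab] at h
      exact h
    -- uniform bound via Banach-Steinhaus
    have hptbdd : ∀ x : X, ∃ C', ∀ n, ‖S n x‖ ≤ C' := by
      intro x
      have h1 : Tendsto (fun n => S n x) atTop (𝓝 x) := by
        rw [tendsto_iff_norm_sub_tendsto_zero]
        have := hStend x
        simpa [norm_sub_rev] using this
      obtain ⟨C', hC'⟩ := h1.norm.bddAbove_range
      exact ⟨C', fun n => hC' (Set.mem_range_self n)⟩
    obtain ⟨M₀', hM₀'⟩ := banach_steinhaus hptbdd
    set M₀ : ℝ := max M₀' 0 with hM₀def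
    have hM₀ : ∀ n, ‖S n‖ ≤ M₀ := fun n => le_trans (hM₀' n) (le_max_left _ _)
    have hM₀0 : 0 ≤ M₀ := le_max_right _ _
    set θ : ℝ := 1/(2*(M₀+1)) with hθdef
    have hθ0 : 0 < θ := by positivity
    have hθ1 : θ ≤ 1 := by
      rw [hθdef, div_le_one (by positivity)]
      linarith
    have hθeq : 2*(M₀+1)*θ = 1 := by
      rw [hθdef]
      field_simp
    -- the recursive construction
    have key : ∀ (j mlo n : ℕ), ∃ m, mlo < m ∧ ∃ j', j < j' ∧ ∃ Q : X →L[ℝ] X,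
        Q * Q = Q ∧ (∀ v ∈ V j, Q v = v) ∧ (∀ x, Q x ∈ V j') ∧ ‖Q - S m‖ ≤ θ^n :=
      fun j mlo n => aux_step V hmono hfd hb S M₀ hM₀ hSidem hSfin hStend M hM0
        (πf j) j (hπfix j) (hπmem j) (hπ3 j) mlo _ (pow_pos hθ0 n)
    choose fm hfm fj hfj fQ hQa hQb hQc hQd using key
    set g : ℕ → ℕ × ℕ × ℕ × (X →L[ℝ] X) := fun n =>
      Nat.rec (0, fj 0 0 0, fm 0 0 0, fQ 0 0 0)
        (fun n p => (p.2.1, fj p.2.1 p.2.2.1 (n+1), fm p.2.1 p.2.2.1 (n+1),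
          fQ p.2.1 p.2.2.1 (n+1))) n with hgdef
    set iseq : ℕ → ℕ := fun n => (g n).1 with hiseq
    set jseq : ℕ → ℕ := fun n => (g n).2.1 with hjseq
    set mseq : ℕ → ℕ := fun n => (g n).2.2.1 with hmseq
    set Qs : ℕ → (X →L[ℝ] X) := fun n => (g n).2.2.2 with hQsdef
    have hlink : ∀ n, iseq (n+1) = jseq n := fun n => rfl
    have hQfixA : ∀ n, ∀ v ∈ V (iseq n), Qs n v = v := by
      intro n
      cases n with
      | zero => exact hQb 0 0 0
      | succ n => exact hQb (g n).2.1 (g n).2.2.1 (n+1)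
    have hQmemA : ∀ n, ∀ x, Qs n x ∈ V (jseq n) := by
      intro n
      cases n with
      | zero => exact hQc 0 0 0
      | succ n => exact hQc (g n).2.1 (g n).2.2.1 (n+1)
    have hQclose : ∀ n, ‖Qs n - S (mseq n)‖ ≤ θ^n := by
      intro n
      cases n with
      | zero => exact hQd 0 0 0
      | succ n => exact hQd (g n).2.1 (g n).2.2.1 (n+1)
    have hQidem : ∀ n, Qs n * Qs n = Qs n := by
      intro n
      cases n with
      | zero => exact hQa 0 0 0
      | succ n => exact hQa (g n).2.1 (g n).2.2.1 (n+1)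
    have hilt : ∀ n, iseq n < iseq (n+1) := by
      intro n
      cases n with
      | zero => exact hfj 0 0 0
      | succ n => exact hfj (g n).2.1 (g n).2.2.1 (n+1)
    have hmlt : ∀ n, mseq n < mseq (n+1) := by
      intro n
      exact hfm (g n).2.1 (g n).2.2.1 (n+1)
    have hmmono : Monotone mseq := (strictMono_nat_of_lt_succ hmlt).monotone
    have hQnorm : ∀ n, ‖Qs n‖ ≤ M₀ + 1 := by
      intro n
      have h1 : ‖Qs n‖ ≤ ‖S (mseq n)‖ + ‖Qs n - S (mseq n)‖ := by
        have : Qs n = S (mseq n) + (Qs n - S (mseq n)) := by abel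
        calc ‖Qs n‖ = ‖S (mseq n) + (Qs n - S (mseq n))‖ := by rw [← this]
          _ ≤ _ := norm_add_le _ _
      have h2 : θ^n ≤ 1 := pow_le_one₀ hθ0.le hθ1
      linarith [hM₀ (mseq n), hQclose n]
    have hQQ : ∀ n (x : X), Qs n (Qs n x) = Qs n x := by
      intro n x
      have := DFunLike.congr_fun (hQidem n) x
      simpa [ContinuousLinearMap.mul_apply] using this
    -- the projections ρ n onto V (jseq n)
    set ρ : ℕ → (X →L[ℝ] X) := fun n =>
      Qs n + (1 - Qs n) * πf (jseq n) * (1 - Qs n) with hρdef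
    have hρapply : ∀ n x, ρ n x
        = Qs n x + (πf (jseq n) (x - Qs n x) - Qs n (πf (jseq n) (x - Qs n x))) := by
      intro n x
      simp [hρdef, ContinuousLinearMap.add_apply, ContinuousLinearMap.mul_apply,
        ContinuousLinearMap.sub_apply, ContinuousLinearMap.one_apply]
    have hρmem : ∀ n x, ρ n x ∈ V (jseq n) := by
      intro n x
      rw [hρapply]
      exact Submodule.add_mem _ (hQmemA n x)
        (Submodule.sub_mem _ (hπmem _ _) (hQmemA n _))
    have hρfix : ∀ n, ∀ v ∈ V (jseq n), ρ n v = v := by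
      intro n v hv
      rw [hρapply]
      have hw : v - Qs n v ∈ V (jseq n) := Submodule.sub_mem _ hv (hQmemA n v)
      rw [hπfix (jseq n) _ hw]
      have h2 : Qs n (v - Qs n v) = 0 := by
        rw [map_sub, hQQ n v, sub_self]
      rw [h2]
      abel
    have hQρ : ∀ n, Qs n * ρ n = Qs n := by
      intro n
      have h0 : Qs n * (1 - Qs n) = 0 := by
        rw [mul_sub, mul_one, hQidem n, sub_self]
      rw [hρdef]
      calc Qs n * (Qs n + (1 - Qs n) * πf (jseq n) * (1 - Qs n))
          = Qs n * Qs n + (Qs n * (1 - Qs n)) * πf (jseq n) * (1 - Qs n) := by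
            noncomm_ring
        _ = Qs n := by rw [h0, hQidem n, zero_mul, zero_mul, add_zero]
    set Mρ : ℝ := (M₀ + 1) + (M₀ + 2)^2 * M with hMρdef
    have hMρ0 : 0 ≤ Mρ := by
      rw [hMρdef]
      have : (0:ℝ) ≤ (M₀+2)^2 * M := mul_nonneg (by positivity) hM0
      linarith
    have hρnorm : ∀ n, ‖ρ n‖ ≤ Mρ := by
      intro n
      have h1Q : ‖(1 : X →L[ℝ] X) - Qs n‖ ≤ M₀ + 2 := by
        calc ‖(1 : X →L[ℝ] X) - Qs n‖ ≤ ‖(1 : X →L[ℝ] X)‖ + ‖Qs n‖ := norm_sub_le _ _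
          _ ≤ 1 + (M₀ + 1) := add_le_add ContinuousLinearMap.norm_id_le (hQnorm n)
          _ = M₀ + 2 := by ring
      calc ‖ρ n‖ ≤ ‖Qs n‖ + ‖(1 - Qs n) * πf (jseq n) * (1 - Qs n)‖ := norm_add_le _ _
        _ ≤ (M₀ + 1) + (M₀ + 2) * M * (M₀ + 2) := by
            apply add_le_add (hQnorm n)
            calc ‖(1 - Qs n) * πf (jseq n) * (1 - Qs n)‖
                ≤ ‖(1 - Qs n) * πf (jseq n)‖ * ‖(1 : X →L[ℝ] X) - Qs n‖ := norm_mul_le _ _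
              _ ≤ (‖(1 : X →L[ℝ] X) - Qs n‖ * ‖πf (jseq n)‖) * ‖(1 : X →L[ℝ] X) - Qs n‖ := by
                  apply mul_le_mul_of_nonneg_right (norm_mul_le _ _) (norm_nonneg _)
              _ ≤ ((M₀ + 2) * M) * (M₀ + 2) := by
                  apply mul_le_mul _ h1Q (norm_nonneg _) (by positivity)
                  exact mul_le_mul h1Q (hπ3 _) (norm_nonneg _) (by linarith)
        _ = Mρ := by rw [hMρdef]; ring
    -- the chain maps
    set G : ℕ → (X →L[ℝ] X) := fun n => ρ n * Qs (n+1) with hGdef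
    have hGapply : ∀ n x, G n x = ρ n (Qs (n+1) x) := by
      intro n x
      simp [hGdef, ContinuousLinearMap.mul_apply]
    have hGmem : ∀ n x, G n x ∈ V (jseq n) := by
      intro n x
      rw [hGapply]
      exact hρmem n _
    set idx : ℕ → ℕ := fun n => jseq n with hidxdef
    have hidx : StrictMono idx := by
      apply strictMono_nat_of_lt_succ
      intro n
      exact hilt (n+1)
    set P : (n : ℕ) → ((V (idx (n+1)) : Submodule ℝ X) →L[ℝ] V (idx n)) := fun n =>
      ContinuousLinearMap.codRestrict
        ((G n).comp (Submodule.subtypeL (V (idx (n+1))))) (V (idx n))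
        (fun x => hGmem n x) with hPdef
    have hPapply : ∀ n (x : V (idx (n+1))), ((P n x : X)) = G n (x : X) := fun n x => rfl
    have hPfix : ∀ (n : ℕ) (x : X) (hx : x ∈ V (idx n)) (hx' : x ∈ V (idx (n+1))),
        ((P n ⟨x, hx'⟩ : V (idx n)) : X) = x := by
      intro n x hx hx'
      rw [hPapply]
      show G n x = x
      rw [hGapply]
      have h1 : Qs (n+1) x = x := hQfixA (n+1) x hx
      rw [h1]
      exact hρfix n x hx
    -- products of the Q's
    set Qprod : ℕ → ℕ → (X →L[ℝ] X) := fun k j =>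
      Nat.rec (Qs (k+1)) (fun j p => p * Qs (k+j+2)) j with hQproddef
    have hQprod0 : ∀ k, Qprod k 0 = Qs (k+1) := fun k => rfl
    have hQprodsucc : ∀ k j, Qprod k (j+1) = Qprod k j * Qs (k+j+2) := fun k j => rfl
    have hswitch : ∀ j k, Qprod k (j+1) = Qs (k+1) * Qprod (k+1) j := by
      intro j
      induction j with
      | zero => intro k; rfl
      | succ j ih =>
          intro k
          calc Qprod k (j+2) = Qprod k (j+1) * Qs (k+j+3) := rfl
            _ = (Qs (k+1) * Qprod (k+1) j) * Qs (k+j+3) := by rw [ih k]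
            _ = Qs (k+1) * (Qprod (k+1) j * Qs (k+j+3)) := by rw [mul_assoc]
            _ = Qs (k+1) * Qprod (k+1) (j+1) := by
                rw [hQprodsucc (k+1) j, show (k+1)+j+2 = k+j+3 from by omega]
    have hprodρ : ∀ j k, Qprod k j * ρ (k+j+1) = Qprod k j := by
      intro j
      induction j with
      | zero => intro k; exact hQρ (k+1)
      | succ j ih =>
          intro k
          show Qprod k (j+1) * ρ (k+j+2) = Qprod k (j+1)
          calc Qprod k (j+1) * ρ (k+j+2)
              = (Qprod k j * Qs (k+j+2)) * ρ (k+j+2) := by rw [hQprodsucc k j]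
            _ = Qprod k j * (Qs (k+j+2) * ρ (k+j+2)) := by rw [mul_assoc]
            _ = Qprod k j * Qs (k+j+2) := by rw [hQρ (k+j+2)]
            _ = Qprod k (j+1) := (hQprodsucc k j).symm
    -- the chain identity
    have hchain : ∀ j k (x : (V (idx (k+j+1)) : Submodule ℝ X)),
        ((projChain (W := fun n => V (idx n)) P k j x : X)) = ρ k (Qprod k j (x : X)) := by
      intro j
      induction j with
      | zero =>
          intro k x
          show ((P k x : X)) = _
          rw [hPapply, hGapply]
          rfl
      | succ j ih =>
          intro k x
          calc ((projChain (W := fun n => V (idx n)) P k (j+1) x : X))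
              = ((projChain (W := fun n => V (idx n)) P k j (P (k+j+1) x) : X)) := rfl
            _ = ρ k (Qprod k j ((P (k+j+1) x : X))) := ih k (P (k+j+1) x)
            _ = ρ k (Qprod k j (G (k+j+1) (x : X))) :=
                congrArg (fun y => ρ k (Qprod k j y)) (hPapply (k+j+1) x)
            _ = ρ k (Qprod k j (ρ (k+j+1) (Qs (k+j+2) (x : X)))) :=
                congrArg (fun y => ρ k (Qprod k j y)) (hGapply (k+j+1) (x : X))
            _ = ρ k (Qprod k j (Qs (k+j+2) (x : X))) := by
                congr 1
                have := DFunLike.congr_fun (hprodρ j k) (Qs (k+j+2) (x : X))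
                simpa [ContinuousLinearMap.mul_apply] using this
            _ = ρ k (Qprod k (j+1) (x : X)) := rfl
    -- norm control on products
    have hE : ∀ j k, ‖Qprod k j - S (mseq (k+1))‖ ≤ 2*(M₀+1)*θ^(k+1) := by
      intro j
      induction j with
      | zero =>
          intro k
          calc ‖Qprod k 0 - S (mseq (k+1))‖ ≤ θ^(k+1) := hQclose (k+1)
            _ ≤ 2*(M₀+1)*θ^(k+1) := by
                nlinarith [pow_nonneg hθ0.le (k+1)]
      | succ j ih =>
          intro k
          have hid : Qprod k (j+1) - S (mseq (k+1))
              = Qs (k+1) * (Qprod (k+1) j - S (mseq (k+2)))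
                + (Qs (k+1) - S (mseq (k+1))) * S (mseq (k+2)) := by
            rw [hswitch j k]
            have hmin : S (mseq (k+1)) * S (mseq (k+2)) = S (mseq (k+1)) :=
              hSmul _ _ (hmmono (Nat.le_succ (k+1)))
            calc Qs (k+1) * Qprod (k+1) j - S (mseq (k+1))
                = Qs (k+1) * Qprod (k+1) j - S (mseq (k+1)) * S (mseq (k+2)) := by rw [hmin]
              _ = Qs (k+1) * (Qprod (k+1) j - S (mseq (k+2)))
                  + (Qs (k+1) - S (mseq (k+1))) * S (mseq (k+2)) := by noncomm_ring
          rw [hid]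
          have h1 : ‖Qs (k+1) * (Qprod (k+1) j - S (mseq (k+2)))‖
              ≤ (M₀+1) * (2*(M₀+1)*θ^(k+2)) := by
            calc ‖Qs (k+1) * (Qprod (k+1) j - S (mseq (k+2)))‖
                ≤ ‖Qs (k+1)‖ * ‖Qprod (k+1) j - S (mseq (k+2))‖ := norm_mul_le _ _
              _ ≤ (M₀+1) * (2*(M₀+1)*θ^(k+2)) := by
                  apply mul_le_mul (hQnorm (k+1)) (ih (k+1)) (norm_nonneg _) (by linarith)
          have h2 : ‖(Qs (k+1) - S (mseq (k+1))) * S (mseq (k+2))‖ ≤ θ^(k+1) * M₀ := by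
            calc ‖(Qs (k+1) - S (mseq (k+1))) * S (mseq (k+2))‖
                ≤ ‖Qs (k+1) - S (mseq (k+1))‖ * ‖S (mseq (k+2))‖ := norm_mul_le _ _
              _ ≤ θ^(k+1) * M₀ := by
                  apply mul_le_mul (hQclose (k+1)) (hM₀ _) (norm_nonneg _)
                    (pow_nonneg hθ0.le _)
          have h3 : (M₀+1) * (2*(M₀+1)*θ^(k+2)) = (M₀+1) * θ^(k+1) := by
            have : θ^(k+2) = θ^(k+1) * θ := by ring
            rw [this]
            have h4 : (M₀+1) * (2*(M₀+1)*(θ^(k+1)*θ)) = (M₀+1) * θ^(k+1) * (2*(M₀+1)*θ) := by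
              ring
            rw [h4, hθeq, mul_one]
          calc ‖Qs (k+1) * (Qprod (k+1) j - S (mseq (k+2)))
                + (Qs (k+1) - S (mseq (k+1))) * S (mseq (k+2))‖
              ≤ ‖Qs (k+1) * (Qprod (k+1) j - S (mseq (k+2)))‖
                + ‖(Qs (k+1) - S (mseq (k+1))) * S (mseq (k+2))‖ := norm_add_le _ _
            _ ≤ (M₀+1) * (2*(M₀+1)*θ^(k+2)) + θ^(k+1) * M₀ := add_le_add h1 h2
            _ = (M₀+1) * θ^(k+1) + θ^(k+1) * M₀ := by rw [h3]
            _ ≤ 2*(M₀+1)*θ^(k+1) := by nlinarith [pow_nonneg hθ0.le (k+1)]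
    have hQprodnorm : ∀ k j, ‖Qprod k j‖ ≤ 3*M₀ + 2 := by
      intro k j
      have h1 : ‖Qprod k j‖ ≤ ‖S (mseq (k+1))‖ + ‖Qprod k j - S (mseq (k+1))‖ := by
        have heq : Qprod k j = S (mseq (k+1)) + (Qprod k j - S (mseq (k+1))) := by abel
        calc ‖Qprod k j‖ = ‖S (mseq (k+1)) + (Qprod k j - S (mseq (k+1)))‖ := by rw [← heq]
          _ ≤ _ := norm_add_le _ _
      have h2 : θ^(k+1) ≤ 1 := pow_le_one₀ hθ0.le hθ1
      have h3 : 2*(M₀+1)*θ^(k+1) ≤ 2*(M₀+1) := by nlinarith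
      linarith [hM₀ (mseq (k+1)), hE j k]
    -- the contradiction
    set C₀ : ℝ := Mρ * (3*M₀ + 2) with hC₀def
    obtain ⟨k, j, hgt⟩ := hc idx hidx P hPfix C₀
    have hle : ‖projChain (W := fun n => V (idx n)) P k (j+1)‖ ≤ C₀ := by
      apply ContinuousLinearMap.opNorm_le_bound _ (by
        rw [hC₀def]
        exact mul_nonneg hMρ0 (by linarith))
      intro x
      have hval : ‖projChain (W := fun n => V (idx n)) P k (j+1) x‖
          = ‖ρ k (Qprod k (j+1) (x : X))‖ := by
        rw [← hchain (j+1) k x]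
        rfl
      rw [hval]
      have hxn : ‖(x : X)‖ = ‖x‖ := rfl
      calc ‖ρ k (Qprod k (j+1) (x : X))‖
          ≤ ‖ρ k‖ * ‖Qprod k (j+1) (x : X)‖ := (ρ k).le_opNorm _
        _ ≤ Mρ * ((3*M₀+2) * ‖(x : X)‖) := by
            apply mul_le_mul (hρnorm k) _ (norm_nonneg _) hMρ0
            exact le_trans ((Qprod k (j+1)).le_opNorm _)
              (mul_le_mul_of_nonneg_right (hQprodnorm k (j+1)) (norm_nonneg _))
        _ = C₀ * ‖x‖ := by rw [hC₀def, hxn]; ring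
    linarith
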